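/- Let v = (1,0,0,0) ∈ M^{3,1} and q̂ = (b, b, 0, 0) with b > 1. Let E(v) = {x : x₀ = a} for some a > 0, a parabolic support hyperplane F = {x : ⟨x, q̂⟩ = −t}, and consider a 2-face W lying in E(v) ∩ F. The angle formed at W between a 3-face lying in E(v) and the cone from q̂ over a face in F is strictly convex (the component of the complement of the two half-hyperplanes not containing 0 is convex and their union is not a hyperplane) if and only if a < b. -/

import Mathlib

/-- The Lorentzian inner product on Minkowski 4-space `M^{3,1}`. -/
noncomputable def lprod (x y : Fin 4 → ℝ) : ℝ :=
  -(x 0 * y 0) + x 1 * y 1 + x 2 * y 2 + x 3 * y 3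

/-- Two subsets `H₁, H₂` (half-hyperplanes with common boundary) form a convex angle
if every connected component of the complement of `H₁ ∪ H₂` not containing `0` is
convex. -/
def ConvexAngleAt (H₁ H₂ : Set (Fin 4 → ℝ)) : Prop :=
  ∀ x ∈ (H₁ ∪ H₂)ᶜ, (0 : Fin 4 → ℝ) ∉ connectedComponentIn (H₁ ∪ H₂)ᶜ x →
    Convex ℝ (connectedComponentIn (H₁ ∪ H₂)ᶜ x)

/-- A subset of `M^{3,1}` is an (affine) hyperplane if it is the level set of a nonzero
linear functional. -/
def IsHyperplaneSet (S : Set (Fin 4 → ℝ)) : Prop :=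
  ∃ (w : Fin 4 → ℝ) (c : ℝ), w ≠ 0 ∧ S = {x | lprod w x = c}

/-- First affine functional: positive side of the elliptic hyperplane. -/
noncomputable def phi1 (a b : ℝ) (x : Fin 4 → ℝ) : ℝ := (b - a) * (x 0 - a)

/-- Second affine functional: positive side of the cone hyperplane. -/
noncomputable def phi2 (a b t : ℝ) (x : Fin 4 → ℝ) : ℝ :=
  (b - a) * ((b - a + t / b) * (x 0 - a) - (b - a) * (x 1 - (a - t / b)))

/-- The convex open sector between the two half-hyperplanes. -/
noncomputable def sConv (a b t : ℝ) : Set (Fin 4 → ℝ) :=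
  {x | 0 < phi1 a b x ∧ 0 < phi2 a b t x}

/-- The reflex open sector (complement of the closed convex cone). -/
noncomputable def sRefl (a b t : ℝ) : Set (Fin 4 → ℝ) :=
  {x | phi1 a b x < 0 ∨ phi2 a b t x < 0}

lemma phi1_comb (a b θ μ : ℝ) (h : θ + μ = 1) (x y : Fin 4 → ℝ) :
    phi1 a b (θ • x + μ • y) = θ * phi1 a b x + μ * phi1 a b y := by
  unfold phi1
  simp only [Pi.add_apply, Pi.smul_apply, smul_eq_mul]
  rw [show θ = 1 - μ from by linarith]
  ring

lemma phi2_comb (a b t θ μ : ℝ) (h : θ + μ = 1) (x y : Fin 4 → ℝ) :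
    phi2 a b t (θ • x + μ • y) = θ * phi2 a b t x + μ * phi2 a b t y := by
  unfold phi2
  simp only [Pi.add_apply, Pi.smul_apply, smul_eq_mul]
  rw [show θ = 1 - μ from by linarith]
  ring

lemma phi1_cont (a b : ℝ) : Continuous (phi1 a b) := by
  unfold phi1
  exact continuous_const.mul ((continuous_apply 0).sub continuous_const)

lemma phi2_cont (a b t : ℝ) : Continuous (phi2 a b t) := by
  unfold phi2
  exact continuous_const.mul
    ((continuous_const.mul ((continuous_apply 0).sub continuous_const)).sub
      (continuous_const.mul ((continuous_apply 1).sub continuous_const)))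

lemma sConv_convex (a b t : ℝ) : Convex ℝ (sConv a b t) := by
  intro x hx y hy θ μ hθ hμ hsum
  obtain ⟨hx1, hx2⟩ := hx
  obtain ⟨hy1, hy2⟩ := hy
  constructor
  · rw [phi1_comb a b θ μ hsum]
    rcases eq_or_lt_of_le hθ with h | h
    · simp [← h]; nlinarith
    · nlinarith
  · rw [phi2_comb a b t θ μ hsum]
    rcases eq_or_lt_of_le hθ with h | h
    · simp [← h]; nlinarith
    · nlinarith

lemma sConv_open (a b t : ℝ) : IsOpen (sConv a b t) := by
  have h1 : IsOpen {x : Fin 4 → ℝ | 0 < phi1 a b x} :=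
    isOpen_lt continuous_const (phi1_cont a b)
  have h2 : IsOpen {x : Fin 4 → ℝ | 0 < phi2 a b t x} :=
    isOpen_lt continuous_const (phi2_cont a b t)
  exact h1.inter h2

lemma sRefl_open (a b t : ℝ) : IsOpen (sRefl a b t) := by
  have h1 : IsOpen {x : Fin 4 → ℝ | phi1 a b x < 0} :=
    isOpen_lt (phi1_cont a b) continuous_const
  have h2 : IsOpen {x : Fin 4 → ℝ | phi2 a b t x < 0} :=
    isOpen_lt (phi2_cont a b t) continuous_const
  exact h1.union h2

lemma sDisj (a b t : ℝ) : Disjoint (sConv a b t) (sRefl a b t) := by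
  rw [Set.disjoint_left]
  rintro x ⟨h1, h2⟩ (h3 | h3) <;> linarith

lemma half1_convex (a b : ℝ) : Convex ℝ {x : Fin 4 → ℝ | phi1 a b x < 0} := by
  intro x hx y hy θ μ hθ hμ hsum
  simp only [Set.mem_setOf_eq] at *
  rw [phi1_comb a b θ μ hsum]
  rcases eq_or_lt_of_le hθ with h | h
  · simp [← h]; nlinarith
  · nlinarith

lemma half2_convex (a b t : ℝ) : Convex ℝ {x : Fin 4 → ℝ | phi2 a b t x < 0} := by
  intro x hx y hy θ μ hθ hμ hsum
  simp only [Set.mem_setOf_eq] at *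
  rw [phi2_comb a b t θ μ hsum]
  rcases eq_or_lt_of_le hθ with h | h
  · simp [← h]; nlinarith
  · nlinarith

lemma sRefl_preconn (a b t : ℝ) (w : Fin 4 → ℝ) (hw1 : phi1 a b w < 0)
    (hw2 : phi2 a b t w < 0) : IsPreconnected (sRefl a b t) := by
  have : sRefl a b t = {x | phi1 a b x < 0} ∪ {x | phi2 a b t x < 0} := by
    ext x; simp [sRefl]
  rw [this]
  exact IsPreconnected.union w hw1 hw2
    (half1_convex a b).isPreconnected (half2_convex a b t).isPreconnected

/-- If `C` is partitioned into two disjoint open sets with `U` preconnected, the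
connected component in `C` of a point of `U` is `U`. -/
lemma connCompIn_eq {X : Type*} [TopologicalSpace X] {C U V : Set X}
    (hC : C = U ∪ V) (hd : Disjoint U V) (hUo : IsOpen U) (hVo : IsOpen V)
    (hUc : IsPreconnected U) {x : X} (hx : x ∈ U) :
    connectedComponentIn C x = U := by
  have hxC : x ∈ C := by rw [hC]; exact Or.inl hx
  have hsub : connectedComponentIn C x ⊆ U ∪ V := by
    rw [← hC]; exact connectedComponentIn_subset C x
  apply subset_antisymm
  · exact IsPreconnected.subset_left_of_subset_union hUo hVo hd hsub
      ⟨x, mem_connectedComponentIn hxC, hx⟩ isPreconnected_connectedComponentIn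
  · apply hUc.subset_connectedComponentIn hx
    rw [hC]; exact Set.subset_union_left

theorem elliptic_parabolic_convexity (a b t : ℝ)
    (ha : 0 < a) (hb : 1 < b) (ht : 0 < t)
    (q c : Fin 4 → ℝ)
    (hq : q = ![b, b, 0, 0]) (hc : c = ![a, a - t / b, 0, 0])
    (E F P H₁ H₂ : Set (Fin 4 → ℝ))
    (hE : E = {x | x 0 = a}) (hF : F = {x | lprod x q = -t})
    (hP : P = E ∩ F)
    (hH₁ : H₁ = {x | x 0 = a ∧ x 1 ≤ a - t / b})
    (hH₂ : H₂ = {y | ∃ x ∈ P, ∃ s : ℝ, 0 ≤ s ∧ y = x + s • (q - c)}) :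
    (ConvexAngleAt H₁ H₂ ∧ ¬ IsHyperplaneSet (H₁ ∪ H₂)) ↔ a < b := by
  have hb0 : (0 : ℝ) < b := by linarith
  have hqc0 : (q - c) 0 = b - a := by simp [hq, hc]
  have hqc1 : (q - c) 1 = b - a + t / b := by simp [hq, hc]; ring
  have hq0 : q 0 = b := by simp [hq]
  have hq1 : q 1 = b := by simp [hq]
  have hq2 : q 2 = 0 := by simp [hq]
  have hq3 : q 3 = 0 := by simp [hq]
  -- coordinate characterization of H₂
  have hH₂mem : ∀ y, y ∈ H₂ ↔ ∃ s : ℝ, 0 ≤ s ∧ y 0 = a + s * (b - a) ∧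
      y 1 = (a - t / b) + s * (b - a + t / b) := by
    intro y
    rw [hH₂]
    constructor
    · rintro ⟨x, hxP, s, hs, rfl⟩
      rw [hP, hE, hF] at hxP
      obtain ⟨hx0, hxF⟩ := hxP
      simp only [Set.mem_setOf_eq] at hx0 hxF
      rw [lprod, hq0, hq1, hq2, hq3] at hxF
      have hxF' : -(a * b) + x 1 * b = -t := by
        rw [hx0] at hxF; linarith [hxF]
      have hx1 : x 1 = a - t / b := by
        field_simp
        linarith
      refine ⟨s, hs, ?_, ?_⟩ <;>
        simp only [Pi.add_apply, Pi.smul_apply, smul_eq_mul, hqc0, hqc1, hx0, hx1]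
    · rintro ⟨s, hs, hy0, hy1⟩
      refine ⟨y - s • (q - c), ?_, s, hs, by module⟩
      have h0 : (y - s • (q - c)) 0 = a := by
        simp only [Pi.sub_apply, Pi.smul_apply, smul_eq_mul, hqc0, hy0]; ring
      have h1 : (y - s • (q - c)) 1 = a - t / b := by
        simp only [Pi.sub_apply, Pi.smul_apply, smul_eq_mul, hqc1, hy1]; ring
      rw [hP, hE, hF]
      refine ⟨h0, ?_⟩
      show lprod _ q = -t
      rw [lprod, hq0, hq1, hq2, hq3, h0, h1]
      field_simp
      ring
  have hsqpos : ∀ (hne : b - a ≠ 0), 0 < (b - a)^2 := fun hne => by positivity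
  -- characterization of the union when `b ≠ a`
  have hmemU : ∀ (hne : b - a ≠ 0) (x : Fin 4 → ℝ), x ∈ H₁ ∪ H₂ ↔
      (0 ≤ phi1 a b x ∧ 0 ≤ phi2 a b t x ∧ (phi1 a b x = 0 ∨ phi2 a b t x = 0)) := by
    intro hne x
    have hsq := hsqpos hne
    constructor
    · rintro (h | h)
      · rw [hH₁] at h
        obtain ⟨h0, h1⟩ := h
        have v1 : phi1 a b x = 0 := by unfold phi1; rw [h0]; ring
        have v2 : phi2 a b t x = (b - a)^2 * ((a - t / b) - x 1) := by
          unfold phi2; rw [h0]; ring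
        refine ⟨v1.ge, ?_, Or.inl v1⟩
        rw [v2]
        exact mul_nonneg hsq.le (by linarith)
      · rw [hH₂mem] at h
        obtain ⟨s, hs, h0, h1⟩ := h
        have v1 : phi1 a b x = s * (b - a)^2 := by unfold phi1; rw [h0]; ring
        have v2 : phi2 a b t x = 0 := by unfold phi2; rw [h0, h1]; ring
        exact ⟨by rw [v1]; exact mul_nonneg hs hsq.le, v2.ge, Or.inr v2⟩
    · rintro ⟨hp1, hp2, hz | hz⟩
      · left
        rw [hH₁]
        have h0 : x 0 = a := by
          rcases mul_eq_zero.1 hz with h | h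
          · exact absurd h hne
          · linarith [sub_eq_zero.1 h]
        refine ⟨h0, ?_⟩
        have v2 : phi2 a b t x = (b - a)^2 * ((a - t / b) - x 1) := by
          unfold phi2; rw [h0]; ring
        rw [v2] at hp2
        nlinarith [hp2, hsq]
      · right
        rw [hH₂mem]
        have hinner : (b - a + t / b) * (x 0 - a) - (b - a) * (x 1 - (a - t / b)) = 0 := by
          rcases mul_eq_zero.1 hz with h | h
          · exact absurd h hne
          · exact h
        refine ⟨(x 0 - a) / (b - a), ?_, by field_simp; ring, ?_⟩
        · have e : (x 0 - a) / (b - a) = ((b - a) * (x 0 - a)) / (b - a)^2 := by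
            rw [sq]; rw [mul_div_mul_left _ _ hne]
          rw [e]
          exact div_nonneg hp1 hsq.le
        · have key : x 1 - (a - t / b) = (x 0 - a) / (b - a) * (b - a + t / b) := by
            rw [div_mul_eq_mul_div, eq_div_iff hne]
            linear_combination -hinner
          linarith [key]
  -- complement identity
  have hCid : ∀ (hne : b - a ≠ 0), (H₁ ∪ H₂)ᶜ = sConv a b t ∪ sRefl a b t := by
    intro hne
    ext x
    simp only [Set.mem_compl_iff, hmemU hne x, sConv, sRefl, Set.mem_union, Set.mem_setOf_eq]
    constructor
    · intro h
      rcases lt_trichotomy (phi1 a b x) 0 with h1 | h1 | h1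
      · exact Or.inr (Or.inl h1)
      · rcases lt_trichotomy (phi2 a b t x) 0 with h2 | h2 | h2
        · exact Or.inr (Or.inr h2)
        · exact absurd ⟨h1.ge, h2.ge, Or.inl h1⟩ h
        · exact absurd ⟨h1.ge, h2.le, Or.inl h1⟩ h
      · rcases lt_trichotomy (phi2 a b t x) 0 with h2 | h2 | h2
        · exact Or.inr (Or.inr h2)
        · exact absurd ⟨h1.le, h2.ge, Or.inr h2⟩ h
        · exact Or.inl ⟨h1, h2⟩
    · rintro (⟨h1, h2⟩ | h) ⟨g1, g2, g3⟩
      · rcases g3 with g | g <;> linarith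
      · rcases h with h | h <;> linarith
  have hp10 : phi1 a b 0 = (a - b) * a := by
    unfold phi1; simp only [Pi.zero_apply]; ring
  have hp20 : phi2 a b t 0 = (a - b) * t := by
    unfold phi2; simp only [Pi.zero_apply]; field_simp; ring
  constructor
  · -- convex angle and non-hyperplane imply a < b
    rintro ⟨hCA, hNH⟩
    by_contra hab
    push_neg at hab
    rcases eq_or_lt_of_le hab with heq | hlt
    · -- b = a : the union is the hyperplane {x₀ = a}
      apply hNH
      refine ⟨![(-1 : ℝ), 0, 0, 0], a, ?_, ?_⟩
      · intro h
        have := congrFun h 0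
        norm_num at this
      · ext x
        have hlp : lprod ![(-1 : ℝ), 0, 0, 0] x = x 0 := by
          rw [lprod]; simp
        simp only [Set.mem_union, Set.mem_setOf_eq, hlp]
        constructor
        · rintro (h | h)
          · rw [hH₁] at h; exact h.1
          · rw [hH₂mem] at h
            obtain ⟨s, hs, h0, h1⟩ := h
            rw [h0, ← heq]; ring
        · intro hx0
          by_cases h1 : x 1 ≤ a - t / b
          · exact Or.inl (by rw [hH₁]; exact ⟨hx0, h1⟩)
          · push_neg at h1
            right
            rw [hH₂mem]
            refine ⟨(x 1 - (a - t / b)) * b / t, ?_, ?_, ?_⟩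
            · exact div_nonneg (mul_nonneg (by linarith) hb0.le) ht.le
            · rw [← heq] at hx0 ⊢
              rw [hx0]; ring
            · rw [← heq]
              field_simp
              ring
    · -- b < a : the reflex sector is a non-convex component avoiding 0
      have hne : b - a ≠ 0 := sub_ne_zero.mpr (ne_of_lt hlt)
      have hab' : a - b ≠ 0 := sub_ne_zero.mpr (ne_of_gt hlt)
      set L : ℝ := (b - a + t / b + 1) / (a - b) with hLdef
      set L' : ℝ := (a - b - t / b + 1) / (a - b) with hL'def
      have hL : (a - b) * L = b - a + t / b + 1 := by
        rw [hLdef, mul_div_cancel₀ _ hab']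
      have hL' : (a - b) * L' = a - b - t / b + 1 := by
        rw [hL'def, mul_div_cancel₀ _ hab']
      set z1 : Fin 4 → ℝ := ![a + 1, (a - t / b) - (L + 1), 0, 0] with hz1def
      set z2 : Fin 4 → ℝ := ![a - 1, (a - t / b) + L, 0, 0] with hz2def
      set w : Fin 4 → ℝ := ![a + 1, (a - t / b) + L', 0, 0] with hwdef
      have hv1z1 : phi1 a b z1 = b - a := by
        unfold phi1; rw [hz1def]
        simp only [Matrix.cons_val_zero]; ring
      have hv2z2 : phi2 a b t z2 = b - a := by
        unfold phi2; rw [hz2def]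
        simp only [Matrix.cons_val_zero, Matrix.cons_val_one, Matrix.head_cons]
        linear_combination (b - a) * hL
      have hv1w : phi1 a b w = b - a := by
        unfold phi1; rw [hwdef]
        simp only [Matrix.cons_val_zero]; ring
      have hv2w : phi2 a b t w = b - a := by
        unfold phi2; rw [hwdef]
        simp only [Matrix.cons_val_zero, Matrix.cons_val_one, Matrix.head_cons]
        linear_combination (b - a) * hL'
      have hz1S : z1 ∈ sRefl a b t := Or.inl (by rw [hv1z1]; linarith)
      have hz2S : z2 ∈ sRefl a b t := Or.inr (by rw [hv2z2]; linarith)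
      have h0conv : (0 : Fin 4 → ℝ) ∈ sConv a b t := by
        constructor
        · rw [hp10]; exact mul_pos (by linarith) ha
        · rw [hp20]; exact mul_pos (by linarith) ht
      have hprec : IsPreconnected (sRefl a b t) :=
        sRefl_preconn a b t w (by rw [hv1w]; linarith) (by rw [hv2w]; linarith)
      have hcomp : connectedComponentIn (H₁ ∪ H₂)ᶜ z1 = sRefl a b t := by
        rw [hCid hne]
        exact connCompIn_eq (Set.union_comm _ _) (sDisj a b t).symm (sRefl_open a b t)
          (sConv_open a b t) hprec hz1S
      have hz1C : z1 ∈ (H₁ ∪ H₂)ᶜ := by rw [hCid hne]; exact Or.inr hz1S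
      have h0not : (0 : Fin 4 → ℝ) ∉ connectedComponentIn (H₁ ∪ H₂)ᶜ z1 := by
        rw [hcomp]
        exact Set.disjoint_left.mp (sDisj a b t) h0conv
      have hconv := hCA z1 hz1C h0not
      rw [hcomp] at hconv
      have hm : ((1 / 2 : ℝ) • z1 + (1 / 2 : ℝ) • z2) ∈ sRefl a b t :=
        hconv hz1S hz2S (by norm_num) (by norm_num) (by norm_num)
      have hmid : ((1 / 2 : ℝ) • z1 + (1 / 2 : ℝ) • z2) ∈ H₁ := by
        rw [hH₁]
        constructor
        · simp only [Pi.add_apply, Pi.smul_apply, smul_eq_mul, hz1def, hz2def,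
            Matrix.cons_val_zero]
          ring
        · simp only [Pi.add_apply, Pi.smul_apply, smul_eq_mul, hz1def, hz2def,
            Matrix.cons_val_one, Matrix.head_cons, Matrix.cons_val_zero]
          linarith
      have hco : ((1 / 2 : ℝ) • z1 + (1 / 2 : ℝ) • z2) ∈ (H₁ ∪ H₂)ᶜ := by
        rw [hCid hne]; exact Or.inr hm
      exact hco (Or.inl hmid)
  · -- a < b implies convex angle and non-hyperplane
    intro hab
    have hne : b - a ≠ 0 := sub_ne_zero.mpr (ne_of_gt hab)
    have h0S : (0 : Fin 4 → ℝ) ∈ sRefl a b t :=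
      Or.inl (by rw [hp10]; exact mul_neg_of_neg_of_pos (by linarith) ha)
    have hprec : IsPreconnected (sRefl a b t) :=
      sRefl_preconn a b t 0 (by rw [hp10]; exact mul_neg_of_neg_of_pos (by linarith) ha)
        (by rw [hp20]; exact mul_neg_of_neg_of_pos (by linarith) ht)
    constructor
    · intro x hx h0not
      rw [hCid hne] at hx
      rcases hx with hx | hx
      · rw [show connectedComponentIn (H₁ ∪ H₂)ᶜ x = sConv a b t from by
          rw [hCid hne]
          exact connCompIn_eq rfl (sDisj a b t) (sConv_open a b t) (sRefl_open a b t)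
            (sConv_convex a b t).isPreconnected hx]
        exact sConv_convex a b t
      · exfalso
        apply h0not
        rw [show connectedComponentIn (H₁ ∪ H₂)ᶜ x = sRefl a b t from by
          rw [hCid hne]
          exact connCompIn_eq (Set.union_comm _ _) (sDisj a b t).symm (sRefl_open a b t)
            (sConv_open a b t) hprec hx]
        exact h0S
    · rintro ⟨w, c', hw, hset⟩
      have hm : ∀ z, z ∈ H₁ ∪ H₂ → lprod w z = c' := by
        intro z hz; rw [hset] at hz; exact hz
      have mem1 : (![a, a - t / b, 0, 0] : Fin 4 → ℝ) ∈ H₁ ∪ H₂ :=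
        Or.inl (by rw [hH₁]; exact ⟨by simp, by simp⟩)
      have mem2 : (![a, a - t / b - 1, 0, 0] : Fin 4 → ℝ) ∈ H₁ ∪ H₂ :=
        Or.inl (by rw [hH₁]; exact ⟨by simp, by simp⟩)
      have mem3 : (![a, a - t / b, 1, 0] : Fin 4 → ℝ) ∈ H₁ ∪ H₂ :=
        Or.inl (by rw [hH₁]; exact ⟨by simp, by simp⟩)
      have mem4 : (![a, a - t / b, 0, 1] : Fin 4 → ℝ) ∈ H₁ ∪ H₂ :=
        Or.inl (by rw [hH₁]; exact ⟨by simp, by simp⟩)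
      have mem5 : (![b, (a - t / b) + (b - a + t / b), 0, 0] : Fin 4 → ℝ) ∈ H₁ ∪ H₂ := by
        right
        rw [hH₂mem]
        refine ⟨1, by norm_num, by simp, by simp⟩
      have E1 := hm _ mem1
      have E2 := hm _ mem2
      have E3 := hm _ mem3
      have E4 := hm _ mem4
      have E5 := hm _ mem5
      rw [lprod] at E1 E2 E3 E4 E5
      simp only [Matrix.cons_val_zero, Matrix.cons_val_one, Matrix.head_cons, Matrix.cons_val_two,
        Matrix.cons_val_three] at E1 E2 E3 E4 E5
      norm_num at E1 E2 E3 E4 E5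
      have hw1 : w 1 = 0 := by linear_combination E1 - E2
      have hw2 : w 2 = 0 := by linear_combination E3 - E1
      have hw3 : w 3 = 0 := by linear_combination E4 - E1
      have hw0' : w 0 * (b - a) = 0 := by
        linear_combination E1 - E5 + (b - a + t / b) * hw1
      have hw0 : w 0 = 0 := by
        rcases mul_eq_zero.1 hw0' with h | h
        · exact h
        · exact absurd h hne
      apply hw
      funext i
      fin_cases i
      · exact hw0
      · exact hw1
      · exact hw2
      · exact hw3
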